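/- arXiv:1603.00577 — 5 statements merged into one kernel-verified Lean document; each statement's English description precedes it below -/
import Mathlib

section
/- Let k ≥ 1 and let g_1, …, g_k be the free generators of the free group F_k, with λ the left regular representation on ℓ²(F_k). For every matrix A = (a_{ij}) ∈ M_k(ℂ), one has k^{-1} ‖Σ_{i,j=1}^k a_{ij} λ(g_i g_j^{-1})‖ ≤ k^{-1} |Tr A| + (3/k) (Σ_{i≠j} |a_{ij}|²)^{1/2}, where the norm on the left is the operator norm on ℓ²(F_k). -/
open scoped ENNReal

noncomputable section

variable {α : Type*}

private theorem lpShift_mem (e : α ≃ α) (ξ : lp (fun _ : α => ℂ) 2) :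
    Memℓp (fun x => ξ (e x)) (2 : ℝ≥0∞) := by
  have hp : 0 < (2 : ℝ≥0∞).toReal := by norm_num
  refine (memℓp_gen_iff hp).2 ?_
  exact e.summable_iff.2 ((memℓp_gen_iff hp).1 (lp.memℓp ξ))

/-- Composition with an index equivalence, as a continuous linear map on `ℓ²`. -/
def lpShift (e : α ≃ α) :
    lp (fun _ : α => ℂ) 2 →L[ℂ] lp (fun _ : α => ℂ) 2 :=
  LinearMap.mkContinuous
    { toFun := fun ξ => (⟨fun x => ξ (e x), lpShift_mem e ξ⟩ : lp (fun _ : α => ℂ) 2)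
      map_add' := fun ξ η => lp.ext <| funext fun x => by
        simp only [lp.coeFn_add, Pi.add_apply]
      map_smul' := fun c ξ => lp.ext <| funext fun x => by
        simp only [lp.coeFn_smul, Pi.smul_apply, RingHom.id_apply] } 1 <| by
    intro ξ
    have hp : 0 < (2 : ℝ≥0∞).toReal := by norm_num
    have : ‖(⟨fun x => ξ (e x), lpShift_mem e ξ⟩ : lp (fun _ : α => ℂ) 2)‖ = ‖ξ‖ := by
      rw [lp.norm_eq_tsum_rpow hp, lp.norm_eq_tsum_rpow hp]
      congr 1
      exact e.tsum_eq fun x => ‖ξ x‖ ^ (2 : ℝ≥0∞).toReal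
    simpa using this.le

/-- The left regular representation of a group `G` on `ℓ²(G)`:
`(lam g ξ) x = ξ (g⁻¹ * x)`. -/
def lam {G : Type*} [Group G] (g : G) :
    lp (fun _ : G => ℂ) 2 →L[ℂ] lp (fun _ : G => ℂ) 2 :=
  lpShift (Equiv.mulLeft g⁻¹)


section Combinatorics

open FreeGroup

variable {α : Type*} [DecidableEq α]

theorem reduce_tail_of_reduce_cons {a : α × Bool} {L : List (α × Bool)}
    (h : reduce (a :: L) = a :: L) : reduce L = L := by
  rw [reduce.cons] at h
  cases hr : reduce L with
  | nil => rw [hr] at h; simp_all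
  | cons b tl =>
    rw [hr] at h
    dsimp only at h
    split_ifs at h with hc
    · exfalso
      have hlen : (reduce L).length ≤ L.length := reduce.red.length_le
      rw [hr, h] at hlen
      simp at hlen
    · injection h with h1 h2

theorem reduce_cons_of_ne {a : α × Bool} {L : List (α × Bool)}
    (h : reduce L = L) (hh : L.head? ≠ some (a.1, !a.2)) : reduce (a :: L) = a :: L := by
  rw [reduce.cons, h]
  cases L with
  | nil => rfl
  | cons b tl =>
    have hb : b ≠ (a.1, !a.2) := by simpa using hh
    have : ¬(a.1 = b.1 ∧ a.2 = !b.2) := by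
      rintro ⟨h1, h2⟩
      exact hb (by ext <;> simp [← h1, h2])
    simp [this]

theorem reduce_cancel {a : α} {b : Bool} {L : List (α × Bool)}
    (h : reduce ((a, b) :: L) = (a, b) :: L) : reduce ((a, !b) :: (a, b) :: L) = L := by
  rw [reduce.cons, h]; simp

theorem shift_eq_mk (i j : α) (x : FreeGroup α) :
    FreeGroup.of j * (FreeGroup.of i)⁻¹ * x = mk ((j, true) :: (i, false) :: x.toWord) := by
  have h1 : FreeGroup.of j = mk [(j, true)] := rfl
  have h2 : (FreeGroup.of i)⁻¹ = mk [(i, false)] := by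
    rw [show FreeGroup.of i = mk [(i, true)] from rfl, inv_mk]
    simp [invRev]
  rw [h1, h2, mul_mk]
  conv_lhs => rw [← mk_toWord (x := x)]
  rw [mul_mk]
  rfl

theorem toWord_W0 {i j : α} (hij : i ≠ j) {x : FreeGroup α}
    (h : x.toWord.head? ≠ some (i, true)) :
    (FreeGroup.of j * (FreeGroup.of i)⁻¹ * x).toWord = (j, true) :: (i, false) :: x.toWord := by
  rw [shift_eq_mk, toWord_mk]
  have h1 : reduce ((i, false) :: x.toWord) = (i, false) :: x.toWord :=
    reduce_cons_of_ne (reduce_toWord x) (by simpa using h)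
  have h2 : reduce ((j, true) :: (i, false) :: x.toWord)
      = (j, true) :: (i, false) :: x.toWord := by
    refine reduce_cons_of_ne h1 ?_
    simp [hij]
  exact h2

theorem toWord_W1 {i j : α} {x : FreeGroup α} {L : List (α × Bool)}
    (hx : x.toWord = (i, true) :: L) (h2 : L.head? ≠ some (j, false)) :
    (FreeGroup.of j * (FreeGroup.of i)⁻¹ * x).toWord = (j, true) :: L := by
  rw [shift_eq_mk, toWord_mk, hx]
  have hred : reduce ((i, true) :: L) = (i, true) :: L := by rw [← hx]; exact reduce_toWord x
  have hL : reduce L = L := reduce_tail_of_reduce_cons hred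
  have hc : reduce ((i, false) :: (i, true) :: L) = L := by
    have := reduce_cancel (b := true) (a := i) (L := L) hred
    simpa using this
  rw [reduce.cons, hc]
  cases hL2 : L with
  | nil => rfl
  | cons b tl =>
    have hb : b ≠ (j, false) := by rw [hL2] at h2; simpa using h2
    have : ¬(j = b.1 ∧ true = !b.2) := by
      rintro ⟨ha, hb2⟩
      have hb2' : b.2 = false := by simpa using hb2.symm
      exact hb (by rw [Prod.ext_iff]; exact ⟨ha.symm, hb2'⟩)
    simp only [List.casesOn]
    simp [this]
    intro ha hb2
    exact absurd (by rw [Prod.ext_iff]; exact ⟨ha.symm, hb2⟩) hb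

theorem toWord_W2 {i j : α} {x : FreeGroup α} {L : List (α × Bool)}
    (hx : x.toWord = (i, true) :: (j, false) :: L) :
    (FreeGroup.of j * (FreeGroup.of i)⁻¹ * x).toWord = L := by
  rw [shift_eq_mk, toWord_mk, hx]
  have hred : reduce ((i, true) :: (j, false) :: L) = (i, true) :: (j, false) :: L := by
    rw [← hx]; exact reduce_toWord x
  have hred2 : reduce ((j, false) :: L) = (j, false) :: L := reduce_tail_of_reduce_cons hred
  have hc : reduce ((i, false) :: (i, true) :: (j, false) :: L) = (j, false) :: L := by
    have := reduce_cancel (b := true) (a := i) (L := (j, false) :: L) hred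
    simpa using this
  rw [reduce.cons, hc]
  have := reduce_cancel (b := false) (a := j) (L := L) hred2
  simpa using this

/-- Shift element `g_j g_i⁻¹ x`. -/
def sh (i j : α) (x : FreeGroup α) : FreeGroup α := FreeGroup.of j * (FreeGroup.of i)⁻¹ * x

/-- Case 0: `x` does not start with `g_i`. -/
def P0 (i : α) (x : FreeGroup α) : Prop := x.toWord.head? ≠ some (i, true)

/-- Case 1: `x` starts with `g_i` but not with `g_i g_j⁻¹`. -/
def P1 (i j : α) (x : FreeGroup α) : Prop :=
  x.toWord.head? = some (i, true) ∧ x.toWord.tail.head? ≠ some (j, false)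

/-- Case 2: `x` starts with `g_i g_j⁻¹`. -/
def P2 (i j : α) (x : FreeGroup α) : Prop :=
  x.toWord.head? = some (i, true) ∧ x.toWord.tail.head? = some (j, false)

theorem toWord_sh_P0 {i j : α} (hij : i ≠ j) {x : FreeGroup α} (h : P0 i x) :
    (sh i j x).toWord = (j, true) :: (i, false) :: x.toWord :=
  toWord_W0 hij h

theorem exists_cons_of_head {i : α} {x : FreeGroup α}
    (h : x.toWord.head? = some (i, true)) : ∃ L, x.toWord = (i, true) :: L := by
  cases hx : x.toWord with
  | nil => rw [hx] at h; simp at h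
  | cons b tl => rw [hx] at h; simp at h; exact ⟨tl, by rw [h]⟩

theorem toWord_sh_P1 {i j : α} {x : FreeGroup α} (h : P1 i j x) :
    (sh i j x).toWord = (j, true) :: x.toWord.tail := by
  obtain ⟨L, hL⟩ := exists_cons_of_head h.1
  have h2 := h.2
  rw [hL] at h2 ⊢
  exact toWord_W1 hL (by simpa using h2)

theorem toWord_sh_P2 {i j : α} {x : FreeGroup α} (h : P2 i j x) :
    x.toWord = (i, true) :: (j, false) :: (sh i j x).toWord := by
  obtain ⟨L, hL⟩ := exists_cons_of_head h.1
  have h2 := h.2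
  rw [hL] at h2
  simp at h2
  obtain ⟨M, hM⟩ : ∃ M, L = (j, false) :: M := by
    cases hcl : L with
    | nil => rw [hcl] at h2; simp at h2
    | cons b tl => rw [hcl] at h2; simp at h2; exact ⟨tl, by rw [h2]⟩
  have hx2 : x.toWord = (i, true) :: (j, false) :: M := by rw [hL, hM]
  unfold sh
  rw [toWord_W2 hx2, hx2]

theorem sh_inj_P0 {i j i' j' : α} {x x' : FreeGroup α} (hij : i ≠ j) (hij' : i' ≠ j')
    (h : P0 i x) (h' : P0 i' x') (he : sh i j x = sh i' j' x') :
    i = i' ∧ j = j' ∧ x = x' := by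
  have e1 := toWord_sh_P0 hij h
  have e2 := toWord_sh_P0 hij' h'
  rw [he] at e1
  have heq := e1.symm.trans e2
  simp at heq
  exact ⟨heq.2.1, heq.1, heq.2.2⟩

theorem sh_inj_P1 {i j j' : α} {x x' : FreeGroup α}
    (h : P1 i j x) (h' : P1 i j' x') (he : sh i j x = sh i j' x') :
    j = j' ∧ x = x' := by
  have e1 := toWord_sh_P1 h
  have e2 := toWord_sh_P1 h'
  rw [he] at e1
  have heq := e1.symm.trans e2
  simp at heq
  refine ⟨heq.1, ?_⟩
  obtain ⟨L, hL⟩ := exists_cons_of_head h.1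
  obtain ⟨L', hL'⟩ := exists_cons_of_head h'.1
  apply toWord_injective
  rw [hL, hL']
  have : L = L' := by
    have := heq.2
    rw [hL, hL'] at this
    simpa using this
  rw [this]

theorem sh_inj_P2 {i j : α} {x x' : FreeGroup α}
    (h : P2 i j x) (h' : P2 i j x') (he : sh i j x = sh i j x') : x = x' := by
  apply toWord_injective
  rw [toWord_sh_P2 h, toWord_sh_P2 h', he]

theorem P1_unique_i {i j i' j' : α} {x : FreeGroup α} (h : P1 i j x) (h' : P1 i' j' x) :
    i = i' := by
  have heq := h.1.symm.trans h'.1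
  simp at heq
  exact heq

theorem P2_unique {i j i' j' : α} {x : FreeGroup α} (h : P2 i j x) (h' : P2 i' j' x) :
    i = i' ∧ j = j' := by
  have h1 := h.1.symm.trans h'.1
  have h2 := h.2.symm.trans h'.2
  simp at h1 h2
  exact ⟨h1, h2⟩

end Combinatorics

theorem lam_apply {G : Type*} [Group G] (g : G) (ξ : lp (fun _ : G => ℂ) 2) (x : G) :
    lam g ξ x = ξ (g⁻¹ * x) := rfl

theorem lam_one {G : Type*} [Group G] :
    lam (1 : G) = (1 : lp (fun _ : G => ℂ) 2 →L[ℂ] lp (fun _ : G => ℂ) 2) := by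
  ext ξ x
  show ξ (1⁻¹ * x) = ξ x
  rw [inv_one, one_mul]

private theorem trunc_mem {G : Type*} (P : G → Prop) [DecidablePred P]
    (f : lp (fun _ : G => ℂ) 2) :
    Memℓp (fun x => if P x then f x else 0) (2 : ℝ≥0∞) := by
  have hp : 0 < (2 : ℝ≥0∞).toReal := by norm_num
  refine memℓp_gen ?_
  have hs := ((memℓp_gen_iff hp).1 (lp.memℓp f))
  refine Summable.of_nonneg_of_le (fun x => Real.rpow_nonneg (norm_nonneg _) _)
    (fun x => ?_) hs
  by_cases h : P x
  · simp [h]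
  · simp only [h, if_false]
    refine Real.rpow_le_rpow (by norm_num) (by simpa using norm_nonneg _) (by norm_num)

/-- Pointwise truncation of an `ℓ²` element by a predicate. -/
def trunc {G : Type*} (P : G → Prop) [DecidablePred P] (f : lp (fun _ : G => ℂ) 2) :
    lp (fun _ : G => ℂ) 2 :=
  ⟨fun x => if P x then f x else 0, trunc_mem P f⟩

theorem trunc_apply {G : Type*} (P : G → Prop) [DecidablePred P] (f : lp (fun _ : G => ℂ) 2)
    (x : G) : trunc P f x = if P x then f x else 0 := rfl

/-- Cauchy–Schwarz for finite sums in `ℂ`. -/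
theorem cs_norm_sq {ι : Type*} (s : Finset ι) (c v : ι → ℂ) :
    ‖∑ i ∈ s, c i * v i‖ ^ 2 ≤ (∑ i ∈ s, ‖c i‖ ^ 2) * ∑ i ∈ s, ‖v i‖ ^ 2 := by
  calc ‖∑ i ∈ s, c i * v i‖ ^ 2 ≤ (∑ i ∈ s, ‖c i‖ * ‖v i‖) ^ 2 := by
        refine pow_le_pow_left₀ (norm_nonneg _) ?_ 2
        refine (norm_sum_le s _).trans ?_
        refine le_of_eq (Finset.sum_congr rfl fun i _ => ?_)
        simp [norm_mul]
    _ ≤ (∑ i ∈ s, ‖c i‖ ^ 2) * ∑ i ∈ s, ‖v i‖ ^ 2 :=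
        Finset.sum_mul_sq_le_sq_mul_sq s _ _

/-- tsum of squares of an `ℓ²` element. -/
theorem tsum_ofReal_norm_sq {G : Type*} (f : lp (fun _ : G => ℂ) 2) :
    ∑' x : G, ENNReal.ofReal (‖f x‖ ^ 2) = ENNReal.ofReal (‖f‖ ^ 2) := by
  have hp : 0 < (2 : ℝ≥0∞).toReal := by norm_num
  have hs : Summable fun x => ‖f x‖ ^ (2 : ℝ≥0∞).toReal := (lp.memℓp f).summable hp
  have h2 : ∀ x : G, ‖f x‖ ^ ((2 : ℝ≥0∞).toReal) = ‖f x‖ ^ (2 : ℕ) := fun x => by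
    rw [ENNReal.toReal_ofNat, Real.rpow_two]
  have hs' : Summable fun x : G => ‖f x‖ ^ (2 : ℕ) := by
    refine hs.congr fun x => h2 x
  have hnorm : ‖f‖ ^ (2 : ℕ) = ∑' x : G, ‖f x‖ ^ (2 : ℕ) := by
    have := lp.norm_rpow_eq_tsum hp f
    rw [ENNReal.toReal_ofNat] at this
    rw [← Real.rpow_two]
    rw [this]
    exact tsum_congr fun x => Real.rpow_two _
  rw [hnorm, ENNReal.ofReal_tsum_of_nonneg (fun x => by positivity) hs']

/-- Injectivity comparison for `ℝ≥0∞` sums. -/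
theorem tsum_ite_comp_le {β γ : Type*} (P : β → Prop) [DecidablePred P] (Φ : β → γ)
    (hΦ : ∀ a b, P a → P b → Φ a = Φ b → a = b) (v : γ → ℝ≥0∞) :
    ∑' a : β, (if P a then v (Φ a) else 0) ≤ ∑' c : γ, v c := by
  have h1 : ∑' a : β, (if P a then v (Φ a) else 0)
      = ∑' a : {a : β // P a}, (if P (a : β) then v (Φ a) else 0) := by
    refine (tsum_subtype_eq_of_support_subset ?_).symm
    intro a ha
    simp only [Function.mem_support] at ha
    by_contra hP
    have hP' : ¬ P a := hP
    exact ha (if_neg hP')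
  rw [h1]
  have h2 : ∑' a : {a : β // P a}, (if P (a : β) then v (Φ a) else 0)
      = ∑' a : {a : β // P a}, v (Φ (a : β)) := by
    refine tsum_congr fun a => ?_
    rw [if_pos a.2]
  rw [h2]
  exact ENNReal.tsum_comp_le_tsum_of_injective
    (f := fun a : {a : β // P a} => Φ (a : β))
    (fun a b hab => Subtype.ext (hΦ _ _ a.2 b.2 hab)) v


section Main

open FreeGroup

variable {k : ℕ}

local notation "G" => FreeGroup (Fin k)
local notation "H" => lp (fun _ : FreeGroup (Fin k) => ℂ) 2

instance (i : Fin k) : DecidablePred (P0 i) := fun x => by unfold P0; infer_instance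
instance (i j : Fin k) : DecidablePred (P1 i j) := fun x => by unfold P1; infer_instance
instance (i j : Fin k) : DecidablePred (P2 i j) := fun x => by unfold P2; infer_instance

/-- Off-diagonal coefficients. -/
def cc (A : Matrix (Fin k) (Fin k) ℂ) (i j : Fin k) : ℂ := if i = j then 0 else A i j

theorem wd_inv_mul (i j : Fin k) (x : G) :
    (FreeGroup.of i * (FreeGroup.of j)⁻¹)⁻¹ * x = sh i j x := by
  rw [mul_inv_rev, inv_inv]; rfl

theorem lam_wd_apply (i j : Fin k) (ξ : H) (x : G) :
    lam (FreeGroup.of i * (FreeGroup.of j)⁻¹) ξ x = ξ (sh i j x) := by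
  rw [lam_apply, wd_inv_mul]

variable {A : Matrix (Fin k) (Fin k) ℂ}

/-- The three truncated pieces. -/
def u0 (A : Matrix (Fin k) (Fin k) ℂ) (ξ : H) : H := ∑ i : Fin k, ∑ j : Fin k,
  cc A i j • trunc (P0 i) (lam (FreeGroup.of i * (FreeGroup.of j)⁻¹) ξ)

def u1 (A : Matrix (Fin k) (Fin k) ℂ) (ξ : H) : H := ∑ i : Fin k, ∑ j : Fin k,
  cc A i j • trunc (P1 i j) (lam (FreeGroup.of i * (FreeGroup.of j)⁻¹) ξ)

def u2 (A : Matrix (Fin k) (Fin k) ℂ) (ξ : H) : H := ∑ i : Fin k, ∑ j : Fin k,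
  cc A i j • trunc (P2 i j) (lam (FreeGroup.of i * (FreeGroup.of j)⁻¹) ξ)

theorem u0_apply (A : Matrix (Fin k) (Fin k) ℂ) (ξ : H) (x : G) : u0 A ξ x
    = ∑ i : Fin k, ∑ j : Fin k, cc A i j * (if P0 i x then ξ (sh i j x) else 0) := by
  unfold u0
  rw [lp.coeFn_sum, Finset.sum_apply]
  refine Finset.sum_congr rfl fun i _ => ?_
  rw [lp.coeFn_sum, Finset.sum_apply]
  refine Finset.sum_congr rfl fun j _ => ?_
  rw [lp.coeFn_smul, Pi.smul_apply, smul_eq_mul, trunc_apply, lam_wd_apply]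

theorem u1_apply (A : Matrix (Fin k) (Fin k) ℂ) (ξ : H) (x : G) : u1 A ξ x
    = ∑ i : Fin k, ∑ j : Fin k, cc A i j * (if P1 i j x then ξ (sh i j x) else 0) := by
  unfold u1
  rw [lp.coeFn_sum, Finset.sum_apply]
  refine Finset.sum_congr rfl fun i _ => ?_
  rw [lp.coeFn_sum, Finset.sum_apply]
  refine Finset.sum_congr rfl fun j _ => ?_
  rw [lp.coeFn_smul, Pi.smul_apply, smul_eq_mul, trunc_apply, lam_wd_apply]

theorem u2_apply (A : Matrix (Fin k) (Fin k) ℂ) (ξ : H) (x : G) : u2 A ξ x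
    = ∑ i : Fin k, ∑ j : Fin k, cc A i j * (if P2 i j x then ξ (sh i j x) else 0) := by
  unfold u2
  rw [lp.coeFn_sum, Finset.sum_apply]
  refine Finset.sum_congr rfl fun i _ => ?_
  rw [lp.coeFn_sum, Finset.sum_apply]
  refine Finset.sum_congr rfl fun j _ => ?_
  rw [lp.coeFn_smul, Pi.smul_apply, smul_eq_mul, trunc_apply, lam_wd_apply]

/-- squared Hilbert-Schmidt norm of the off-diagonal part -/
def sig2 (A : Matrix (Fin k) (Fin k) ℂ) : ℝ := ∑ i : Fin k, ∑ j : Fin k, ‖cc A i j‖ ^ 2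

theorem sig2_nonneg (A : Matrix (Fin k) (Fin k) ℂ) : 0 ≤ sig2 A := by
  unfold sig2; positivity

/-- decomposition of the regular representation pieces -/
theorem lam_decomp (ξ : H) (i j : Fin k) :
    lam (FreeGroup.of i * (FreeGroup.of j)⁻¹) ξ
      = trunc (P0 i) (lam (FreeGroup.of i * (FreeGroup.of j)⁻¹) ξ)
        + trunc (P1 i j) (lam (FreeGroup.of i * (FreeGroup.of j)⁻¹) ξ)
        + trunc (P2 i j) (lam (FreeGroup.of i * (FreeGroup.of j)⁻¹) ξ) := by
  apply lp.ext
  funext x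
  rw [lp.coeFn_add, lp.coeFn_add, Pi.add_apply, Pi.add_apply,
    trunc_apply, trunc_apply, trunc_apply]
  by_cases h0 : P0 i x
  · have h1 : ¬ P1 i j x := fun h => h0 h.1
    have h2 : ¬ P2 i j x := fun h => h0 h.1
    simp [h0, h1, h2]
  · have hhead : x.toWord.head? = some (i, true) := not_not.1 h0
    by_cases h2 : x.toWord.tail.head? = some (j, false)
    · have hP2 : P2 i j x := ⟨hhead, h2⟩
      have hP1 : ¬ P1 i j x := fun h => h.2 h2
      simp [h0, hP1, hP2]
    · have hP1 : P1 i j x := ⟨hhead, h2⟩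
      have hP2 : ¬ P2 i j x := fun h => h2 h.2
      simp [h0, hP1, hP2]

theorem T_apply (A : Matrix (Fin k) (Fin k) ℂ) (ξ : H) :
    (∑ i : Fin k, ∑ j : Fin k, cc A i j • lam (FreeGroup.of i * (FreeGroup.of j)⁻¹)) ξ
      = u0 A ξ + u1 A ξ + u2 A ξ := by
  rw [ContinuousLinearMap.sum_apply]
  unfold u0 u1 u2
  rw [← Finset.sum_add_distrib, ← Finset.sum_add_distrib]
  refine Finset.sum_congr rfl fun i _ => ?_
  rw [ContinuousLinearMap.sum_apply]
  rw [← Finset.sum_add_distrib, ← Finset.sum_add_distrib]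
  refine Finset.sum_congr rfl fun j _ => ?_
  rw [ContinuousLinearMap.smul_apply]
  conv_lhs => rw [lam_decomp ξ i j]
  rw [smul_add, smul_add]

theorem norm_le_of_key {u : lp (fun _ : FreeGroup (Fin k) => ℂ) 2} {r : ℝ} (hr : 0 ≤ r)
    (h : ∑' x : G, ENNReal.ofReal (‖u x‖ ^ 2) ≤ ENNReal.ofReal (r ^ 2)) : ‖u‖ ≤ r := by
  rw [tsum_ofReal_norm_sq] at h
  refine le_of_pow_le_pow_left₀ (n := 2) two_ne_zero hr ?_
  exact (ENNReal.ofReal_le_ofReal_iff (by positivity)).1 h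

theorem sum_sum_eq {M : Type*} [AddCommMonoid M] {ι κ : Type*} [Fintype ι] [Fintype κ]
    (t : ι → κ → M) : ∑ i, ∑ j, t i j = ∑ p : ι × κ, t p.1 p.2 := by
  rw [Fintype.sum_prod_type]

theorem sum_tsum_eq {ι β : Type*} [Fintype ι] (F : ι → β → ℝ≥0∞) :
    ∑ i, ∑' x, F i x = ∑' q : ι × β, F q.1 q.2 := by
  rw [ENNReal.tsum_prod']
  exact (tsum_fintype _).symm

theorem sig2_eq_prod (A : Matrix (Fin k) (Fin k) ℂ) :
    sig2 A = ∑ p : Fin k × Fin k, ‖cc A p.1 p.2‖ ^ 2 :=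
  sum_sum_eq _

theorem norm_u0_le (A : Matrix (Fin k) (Fin k) ℂ) (ξ : H) :
    ‖u0 A ξ‖ ≤ Real.sqrt (sig2 A) * ‖ξ‖ := by
  refine norm_le_of_key (by positivity) ?_
  have hrw : (Real.sqrt (sig2 A) * ‖ξ‖) ^ 2 = sig2 A * ‖ξ‖ ^ 2 := by
    rw [mul_pow, Real.sq_sqrt (sig2_nonneg A)]
  rw [hrw]
  have hpt : ∀ x : G, ‖u0 A ξ x‖ ^ 2
      ≤ sig2 A * ∑ p : Fin k × Fin k,
          (if p.1 ≠ p.2 ∧ P0 p.1 x then ‖ξ (sh p.1 p.2 x)‖ ^ 2 else 0) := by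
    intro x
    rw [u0_apply]
    have hco : ∀ i j : Fin k, cc A i j * (if P0 i x then ξ (sh i j x) else 0)
        = cc A i j * (if i ≠ j ∧ P0 i x then ξ (sh i j x) else 0) := by
      intro i j
      by_cases hij : i = j
      · simp [cc, hij]
      · simp [hij]
    simp only [hco]
    rw [sum_sum_eq (fun i j => cc A i j * (if i ≠ j ∧ P0 i x then ξ (sh i j x) else 0))]
    refine le_trans (cs_norm_sq Finset.univ _ _) (le_of_eq ?_)
    congr 1
    · exact (sig2_eq_prod A).symm
    · refine Finset.sum_congr rfl fun p _ => ?_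
      by_cases h : p.1 ≠ p.2 ∧ P0 p.1 x <;> simp [h]
  calc ∑' x : G, ENNReal.ofReal (‖u0 A ξ x‖ ^ 2)
      ≤ ∑' x : G, ENNReal.ofReal (sig2 A * ∑ p : Fin k × Fin k,
          (if p.1 ≠ p.2 ∧ P0 p.1 x then ‖ξ (sh p.1 p.2 x)‖ ^ 2 else 0)) :=
        ENNReal.tsum_le_tsum fun x => ENNReal.ofReal_le_ofReal (hpt x)
    _ = ENNReal.ofReal (sig2 A) * ∑' x : G, ENNReal.ofReal (∑ p : Fin k × Fin k,
          (if p.1 ≠ p.2 ∧ P0 p.1 x then ‖ξ (sh p.1 p.2 x)‖ ^ 2 else 0)) := by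
        rw [← ENNReal.tsum_mul_left]
        exact tsum_congr fun x => ENNReal.ofReal_mul (sig2_nonneg A)
    _ ≤ ENNReal.ofReal (sig2 A) * ENNReal.ofReal (‖ξ‖ ^ 2) := by
        refine mul_le_mul_right ?_ _
        calc ∑' x : G, ENNReal.ofReal (∑ p : Fin k × Fin k,
            (if p.1 ≠ p.2 ∧ P0 p.1 x then ‖ξ (sh p.1 p.2 x)‖ ^ 2 else 0))
            = ∑' x : G, ∑ p : Fin k × Fin k,
              (if p.1 ≠ p.2 ∧ P0 p.1 x then ENNReal.ofReal (‖ξ (sh p.1 p.2 x)‖ ^ 2) else 0) := by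
              refine tsum_congr fun x => ?_
              rw [ENNReal.ofReal_sum_of_nonneg (fun p _ => by positivity)]
              refine Finset.sum_congr rfl fun p _ => ?_
              by_cases h : p.1 ≠ p.2 ∧ P0 p.1 x <;> simp [h]
          _ = ∑ p : Fin k × Fin k, ∑' x : G,
              (if p.1 ≠ p.2 ∧ P0 p.1 x then ENNReal.ofReal (‖ξ (sh p.1 p.2 x)‖ ^ 2) else 0) :=
              Summable.tsum_finsetSum (fun _ _ => ENNReal.summable)
          _ = ∑' q : (Fin k × Fin k) × G,
              (if q.1.1 ≠ q.1.2 ∧ P0 q.1.1 q.2 then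
                ENNReal.ofReal (‖ξ (sh q.1.1 q.1.2 q.2)‖ ^ 2) else 0) :=
              sum_tsum_eq (fun (p : Fin k × Fin k) (x : G) =>
                if p.1 ≠ p.2 ∧ P0 p.1 x then ENNReal.ofReal (‖ξ (sh p.1 p.2 x)‖ ^ 2) else 0)
          _ ≤ ∑' z : G, ENNReal.ofReal (‖ξ z‖ ^ 2) := by
              refine tsum_ite_comp_le
                (P := fun q : (Fin k × Fin k) × G => q.1.1 ≠ q.1.2 ∧ P0 q.1.1 q.2)
                (fun q => sh q.1.1 q.1.2 q.2) ?_
                (fun z => ENNReal.ofReal (‖ξ z‖ ^ 2))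
              rintro ⟨⟨i, j⟩, x⟩ ⟨⟨i', j'⟩, x'⟩ ⟨hij, h0⟩ ⟨hij', h0'⟩ he
              obtain ⟨h1, h2, h3⟩ := sh_inj_P0 hij hij' h0 h0' he
              simp only [Prod.mk.injEq]
              exact ⟨⟨h1, h2⟩, h3⟩
          _ = ENNReal.ofReal (‖ξ‖ ^ 2) := tsum_ofReal_norm_sq ξ
    _ = ENNReal.ofReal (sig2 A * ‖ξ‖ ^ 2) := (ENNReal.ofReal_mul (sig2_nonneg A)).symm


theorem norm_u2_le (A : Matrix (Fin k) (Fin k) ℂ) (ξ : H) :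
    ‖u2 A ξ‖ ≤ Real.sqrt (sig2 A) * ‖ξ‖ := by
  refine norm_le_of_key (by positivity) ?_
  have hrw : (Real.sqrt (sig2 A) * ‖ξ‖) ^ 2 = sig2 A * ‖ξ‖ ^ 2 := by
    rw [mul_pow, Real.sq_sqrt (sig2_nonneg A)]
  rw [hrw]
  have hpt : ∀ x : G, ‖u2 A ξ x‖ ^ 2
      ≤ ∑ p : Fin k × Fin k, (if p.1 ≠ p.2 ∧ P2 p.1 p.2 x then
          ‖cc A p.1 p.2‖ ^ 2 * ‖ξ (sh p.1 p.2 x)‖ ^ 2 else 0) := by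
    intro x
    rw [u2_apply]
    by_cases hlive : ∃ i0 j0 : Fin k, P2 i0 j0 x
    · obtain ⟨i0, j0, hP2⟩ := hlive
      have hcol : (∑ i : Fin k, ∑ j : Fin k,
          cc A i j * (if P2 i j x then ξ (sh i j x) else 0))
          = cc A i0 j0 * ξ (sh i0 j0 x) := by
        rw [Finset.sum_eq_single_of_mem i0 (Finset.mem_univ _)]
        · rw [Finset.sum_eq_single_of_mem j0 (Finset.mem_univ _)]
          · rw [if_pos hP2]
          · intro j _ hj
            rcases Classical.em (P2 i0 j x) with h | h
            · exact absurd (P2_unique h hP2).2 hj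
            · rw [if_neg h, mul_zero]
        · intro i _ hi
          refine Finset.sum_eq_zero fun j _ => ?_
          rcases Classical.em (P2 i j x) with h | h
          · exact absurd (P2_unique h hP2).1 hi
          · rw [if_neg h, mul_zero]
      rw [hcol]
      by_cases hij : i0 = j0
      · have : cc A i0 j0 = 0 := by simp [cc, hij]
        rw [this]
        simp only [zero_mul, norm_zero]
        rw [zero_pow (two_ne_zero)]
        positivity
      · have hterm := Finset.single_le_sum
          (f := fun p : Fin k × Fin k => if p.1 ≠ p.2 ∧ P2 p.1 p.2 x then
            ‖cc A p.1 p.2‖ ^ 2 * ‖ξ (sh p.1 p.2 x)‖ ^ 2 else 0)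
          (fun p _ => by positivity) (Finset.mem_univ (i0, j0))
        dsimp only at hterm
        rw [if_pos (⟨hij, hP2⟩ : i0 ≠ j0 ∧ P2 i0 j0 x)] at hterm
        refine le_trans (le_of_eq ?_) hterm
        rw [norm_mul, mul_pow]
    · push_neg at hlive
      have hz : (∑ i : Fin k, ∑ j : Fin k,
          cc A i j * (if P2 i j x then ξ (sh i j x) else 0)) = 0 :=
        Finset.sum_eq_zero fun i _ => Finset.sum_eq_zero fun j _ => by
          rw [if_neg (hlive i j), mul_zero]
      rw [hz]
      simp only [norm_zero]
      rw [zero_pow (two_ne_zero)]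
      positivity
  calc ∑' x : G, ENNReal.ofReal (‖u2 A ξ x‖ ^ 2)
      ≤ ∑' x : G, ∑ p : Fin k × Fin k, (if p.1 ≠ p.2 ∧ P2 p.1 p.2 x then
          ENNReal.ofReal (‖cc A p.1 p.2‖ ^ 2 * ‖ξ (sh p.1 p.2 x)‖ ^ 2) else 0) := by
        refine ENNReal.tsum_le_tsum fun x => ?_
        refine le_trans (ENNReal.ofReal_le_ofReal (hpt x)) (le_of_eq ?_)
        rw [ENNReal.ofReal_sum_of_nonneg (fun p _ => by positivity)]
        refine Finset.sum_congr rfl fun p _ => ?_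
        by_cases h : p.1 ≠ p.2 ∧ P2 p.1 p.2 x <;> simp [h]
    _ = ∑ p : Fin k × Fin k, ENNReal.ofReal (‖cc A p.1 p.2‖ ^ 2) * ∑' x : G,
          (if p.1 ≠ p.2 ∧ P2 p.1 p.2 x then ENNReal.ofReal (‖ξ (sh p.1 p.2 x)‖ ^ 2) else 0) := by
        rw [Summable.tsum_finsetSum (fun _ _ => ENNReal.summable)]
        refine Finset.sum_congr rfl fun p _ => ?_
        rw [← ENNReal.tsum_mul_left]
        refine tsum_congr fun x => ?_
        by_cases h : p.1 ≠ p.2 ∧ P2 p.1 p.2 x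
        · rw [if_pos h, if_pos h, ENNReal.ofReal_mul (by positivity)]
        · rw [if_neg h, if_neg h, mul_zero]
    _ ≤ ∑ p : Fin k × Fin k, ENNReal.ofReal (‖cc A p.1 p.2‖ ^ 2) * ENNReal.ofReal (‖ξ‖ ^ 2) := by
        refine Finset.sum_le_sum fun p _ => mul_le_mul_right ?_ _
        refine le_trans (le_of_eq ?_) ((tsum_ite_comp_le
          (P := fun x : G => p.1 ≠ p.2 ∧ P2 p.1 p.2 x) (sh p.1 p.2) ?_
          (fun z => ENNReal.ofReal (‖ξ z‖ ^ 2))).trans (le_of_eq (tsum_ofReal_norm_sq ξ)))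
        · rfl
        · intro a b ha hb he
          exact sh_inj_P2 ha.2 hb.2 he
    _ = ENNReal.ofReal (sig2 A * ‖ξ‖ ^ 2) := by
        rw [← Finset.sum_mul, ← ENNReal.ofReal_sum_of_nonneg (fun p _ => by positivity),
          ← sig2_eq_prod, ← ENNReal.ofReal_mul (sig2_nonneg A)]

theorem norm_u1_le (A : Matrix (Fin k) (Fin k) ℂ) (ξ : H) :
    ‖u1 A ξ‖ ≤ Real.sqrt (sig2 A) * ‖ξ‖ := by
  refine norm_le_of_key (by positivity) ?_
  have hrw : (Real.sqrt (sig2 A) * ‖ξ‖) ^ 2 = sig2 A * ‖ξ‖ ^ 2 := by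
    rw [mul_pow, Real.sq_sqrt (sig2_nonneg A)]
  rw [hrw]
  have hpt : ∀ x : G, ‖u1 A ξ x‖ ^ 2
      ≤ ∑ i : Fin k, (∑ j : Fin k, ‖cc A i j‖ ^ 2) *
          (∑ j : Fin k, if i ≠ j ∧ P1 i j x then ‖ξ (sh i j x)‖ ^ 2 else 0) := by
    intro x
    rw [u1_apply]
    by_cases hlive : ∃ i0 j0 : Fin k, P1 i0 j0 x
    · obtain ⟨i0, j0, hP1⟩ := hlive
      have hcol : (∑ i : Fin k, ∑ j : Fin k,
          cc A i j * (if P1 i j x then ξ (sh i j x) else 0))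
          = ∑ j : Fin k, cc A i0 j * (if P1 i0 j x then ξ (sh i0 j x) else 0) := by
        refine Finset.sum_eq_single_of_mem i0 (Finset.mem_univ _) fun i _ hi => ?_
        refine Finset.sum_eq_zero fun j _ => ?_
        rcases Classical.em (P1 i j x) with h | h
        · exact absurd (P1_unique_i h hP1) hi
        · rw [if_neg h, mul_zero]
      rw [hcol]
      have hco : ∀ j : Fin k, cc A i0 j * (if P1 i0 j x then ξ (sh i0 j x) else 0)
          = cc A i0 j * (if i0 ≠ j ∧ P1 i0 j x then ξ (sh i0 j x) else 0) := by
        intro j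
        by_cases hij : i0 = j
        · simp [cc, hij]
        · simp [hij]
      simp only [hco]
      have hcs := cs_norm_sq Finset.univ (fun j => cc A i0 j)
        (fun j => if i0 ≠ j ∧ P1 i0 j x then ξ (sh i0 j x) else 0)
      have hcs2 : (∑ j : Fin k, ‖if i0 ≠ j ∧ P1 i0 j x then ξ (sh i0 j x) else 0‖ ^ 2)
          = ∑ j : Fin k, if i0 ≠ j ∧ P1 i0 j x then ‖ξ (sh i0 j x)‖ ^ 2 else 0 := by
        refine Finset.sum_congr rfl fun j _ => ?_
        by_cases h : i0 ≠ j ∧ P1 i0 j x <;> simp [h]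
      rw [hcs2] at hcs
      refine hcs.trans ?_
      exact Finset.single_le_sum
        (f := fun i => (∑ j : Fin k, ‖cc A i j‖ ^ 2) *
          (∑ j : Fin k, if i ≠ j ∧ P1 i j x then ‖ξ (sh i j x)‖ ^ 2 else 0))
        (fun i _ => by positivity) (Finset.mem_univ i0)
    · push_neg at hlive
      have hz : (∑ i : Fin k, ∑ j : Fin k,
          cc A i j * (if P1 i j x then ξ (sh i j x) else 0)) = 0 :=
        Finset.sum_eq_zero fun i _ => Finset.sum_eq_zero fun j _ => by
          rw [if_neg (hlive i j), mul_zero]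
      rw [hz]
      simp only [norm_zero]
      rw [zero_pow (two_ne_zero)]
      positivity
  calc ∑' x : G, ENNReal.ofReal (‖u1 A ξ x‖ ^ 2)
      ≤ ∑' x : G, ∑ i : Fin k, ENNReal.ofReal ((∑ j : Fin k, ‖cc A i j‖ ^ 2) *
          (∑ j : Fin k, if i ≠ j ∧ P1 i j x then ‖ξ (sh i j x)‖ ^ 2 else 0)) := by
        refine ENNReal.tsum_le_tsum fun x => ?_
        refine le_trans (ENNReal.ofReal_le_ofReal (hpt x)) (le_of_eq ?_)
        exact ENNReal.ofReal_sum_of_nonneg (fun i _ => by positivity)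
    _ = ∑ i : Fin k, ENNReal.ofReal (∑ j : Fin k, ‖cc A i j‖ ^ 2) * ∑' x : G,
          ∑ j : Fin k, (if i ≠ j ∧ P1 i j x then ENNReal.ofReal (‖ξ (sh i j x)‖ ^ 2) else 0) := by
        rw [Summable.tsum_finsetSum (fun _ _ => ENNReal.summable)]
        refine Finset.sum_congr rfl fun i _ => ?_
        rw [← ENNReal.tsum_mul_left]
        refine tsum_congr fun x => ?_
        rw [ENNReal.ofReal_mul (by positivity),
          ENNReal.ofReal_sum_of_nonneg (fun j _ => by positivity),
          ENNReal.ofReal_sum_of_nonneg (fun j _ => by positivity)]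
        have hj : ∀ j : Fin k, ENNReal.ofReal
            (if i ≠ j ∧ P1 i j x then ‖ξ (sh i j x)‖ ^ 2 else 0)
            = (if i ≠ j ∧ P1 i j x then ENNReal.ofReal (‖ξ (sh i j x)‖ ^ 2) else 0) := by
          intro j; by_cases h : i ≠ j ∧ P1 i j x <;> simp [h]
        simp only [hj]
    _ ≤ ∑ i : Fin k, ENNReal.ofReal (∑ j : Fin k, ‖cc A i j‖ ^ 2) * ENNReal.ofReal (‖ξ‖ ^ 2) := by
        refine Finset.sum_le_sum fun i _ => mul_le_mul_right ?_ _
        calc ∑' x : G, ∑ j : Fin k,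
            (if i ≠ j ∧ P1 i j x then ENNReal.ofReal (‖ξ (sh i j x)‖ ^ 2) else 0)
            = ∑ j : Fin k, ∑' x : G,
              (if i ≠ j ∧ P1 i j x then ENNReal.ofReal (‖ξ (sh i j x)‖ ^ 2) else 0) :=
              Summable.tsum_finsetSum (fun _ _ => ENNReal.summable)
          _ = ∑' q : Fin k × G,
              (if i ≠ q.1 ∧ P1 i q.1 q.2 then ENNReal.ofReal (‖ξ (sh i q.1 q.2)‖ ^ 2) else 0) :=
              sum_tsum_eq (fun (j : Fin k) (x : G) =>
                if i ≠ j ∧ P1 i j x then ENNReal.ofReal (‖ξ (sh i j x)‖ ^ 2) else 0)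
          _ ≤ ∑' z : G, ENNReal.ofReal (‖ξ z‖ ^ 2) := by
              refine tsum_ite_comp_le
                (P := fun q : Fin k × G => i ≠ q.1 ∧ P1 i q.1 q.2)
                (fun q => sh i q.1 q.2) ?_
                (fun z => ENNReal.ofReal (‖ξ z‖ ^ 2))
              rintro ⟨j, x⟩ ⟨j', x'⟩ ⟨hij, h1⟩ ⟨hij', h1'⟩ he
              obtain ⟨h2, h3⟩ := sh_inj_P1 h1 h1' he
              simp only [Prod.mk.injEq]
              exact ⟨h2, h3⟩
          _ = ENNReal.ofReal (‖ξ‖ ^ 2) := tsum_ofReal_norm_sq ξ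
    _ = ENNReal.ofReal (sig2 A * ‖ξ‖ ^ 2) := by
        rw [← Finset.sum_mul, ← ENNReal.ofReal_sum_of_nonneg (fun i _ => by positivity),
          show (∑ i : Fin k, ∑ j : Fin k, ‖cc A i j‖ ^ 2) = sig2 A from rfl,
          ← ENNReal.ofReal_mul (sig2_nonneg A)]


theorem norm_T_le (A : Matrix (Fin k) (Fin k) ℂ) :
    ‖∑ i : Fin k, ∑ j : Fin k, cc A i j • lam (FreeGroup.of i * (FreeGroup.of j)⁻¹)‖
      ≤ 3 * Real.sqrt (sig2 A) := by
  refine ContinuousLinearMap.opNorm_le_bound _ (by positivity) fun ξ => ?_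
  rw [T_apply]
  have h0 := norm_u0_le A ξ
  have h1 := norm_u1_le A ξ
  have h2 := norm_u2_le A ξ
  calc ‖u0 A ξ + u1 A ξ + u2 A ξ‖ ≤ ‖u0 A ξ‖ + ‖u1 A ξ‖ + ‖u2 A ξ‖ := norm_add₃_le
    _ ≤ 3 * Real.sqrt (sig2 A) * ‖ξ‖ := by nlinarith [norm_nonneg ξ, Real.sqrt_nonneg (sig2 A)]

theorem S_eq (A : Matrix (Fin k) (Fin k) ℂ) :
    (∑ i : Fin k, ∑ j : Fin k, A i j • lam (FreeGroup.of i * (FreeGroup.of j)⁻¹))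
      = A.trace • (1 : lp (fun _ : FreeGroup (Fin k) => ℂ) 2 →L[ℂ]
            lp (fun _ : FreeGroup (Fin k) => ℂ) 2)
        + ∑ i : Fin k, ∑ j : Fin k, cc A i j • lam (FreeGroup.of i * (FreeGroup.of j)⁻¹) := by
  have hterm : ∀ i j : Fin k, A i j • lam (FreeGroup.of i * (FreeGroup.of j)⁻¹)
      = (if i = j then A i j • (1 : lp (fun _ : FreeGroup (Fin k) => ℂ) 2 →L[ℂ]
            lp (fun _ : FreeGroup (Fin k) => ℂ) 2) else 0)
        + cc A i j • lam (FreeGroup.of i * (FreeGroup.of j)⁻¹) := by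
    intro i j
    by_cases h : i = j
    · subst h
      rw [if_pos rfl, mul_inv_cancel, lam_one]
      simp [cc]
    · rw [if_neg h]
      simp [cc, h]
  simp only [hterm]
  have e1 : ∀ i : Fin k, (∑ j : Fin k,
      ((if i = j then A i j • (1 : lp (fun _ : FreeGroup (Fin k) => ℂ) 2 →L[ℂ]
          lp (fun _ : FreeGroup (Fin k) => ℂ) 2) else 0)
        + cc A i j • lam (FreeGroup.of i * (FreeGroup.of j)⁻¹)))
      = (∑ j : Fin k, (if i = j then A i j • (1 : lp (fun _ : FreeGroup (Fin k) => ℂ) 2 →L[ℂ]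
          lp (fun _ : FreeGroup (Fin k) => ℂ) 2) else 0))
        + ∑ j : Fin k, cc A i j • lam (FreeGroup.of i * (FreeGroup.of j)⁻¹) :=
    fun i => Finset.sum_add_distrib
  simp only [e1]
  rw [Finset.sum_add_distrib]
  congr 1
  · have hin : ∀ i : Fin k, (∑ j : Fin k, if i = j then A i j • (1 : lp (fun _ : FreeGroup (Fin k) => ℂ) 2 →L[ℂ]
        lp (fun _ : FreeGroup (Fin k) => ℂ) 2) else 0) = A i i • 1 := by
      intro i
      rw [Finset.sum_ite_eq]
      simp
    simp only [hin]
    rw [← Finset.sum_smul]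
    rfl

end Main

/-- For any matrix `A ∈ M_k(ℂ)`, the operator norm of
`k⁻¹ ∑_{i,j} a_{ij} λ(gᵢ gⱼ⁻¹)` (where `g₁, …, g_k` are the free generators of `F_k`
and `λ` is the left regular representation on `ℓ²(F_k)`) is bounded by
`k⁻¹ |Tr A| + (3/k) (∑_{i≠j} |a_{ij}|²)^{1/2}`. -/
theorem haagerup_bound_on_generator_pairs {k : ℕ} (hk : 1 ≤ k)
    (A : Matrix (Fin k) (Fin k) ℂ) :
    (k : ℝ)⁻¹ * ‖∑ i : Fin k, ∑ j : Fin k,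
        A i j • lam (FreeGroup.of i * (FreeGroup.of j)⁻¹)‖ ≤
      (k : ℝ)⁻¹ * ‖A.trace‖ +
        (3 / k) * Real.sqrt (∑ i : Fin k, ∑ j : Fin k,
          if i ≠ j then ‖A i j‖ ^ 2 else 0) := by
  have hsig : (∑ i : Fin k, ∑ j : Fin k, if i ≠ j then ‖A i j‖ ^ 2 else 0) = sig2 A := by
    refine Finset.sum_congr rfl fun i _ => Finset.sum_congr rfl fun j _ => ?_
    by_cases h : i = j
    · simp [cc, h]
    · simp [cc, h]
  rw [hsig]
  have hS : ‖∑ i : Fin k, ∑ j : Fin k, A i j • lam (FreeGroup.of i * (FreeGroup.of j)⁻¹)‖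
      ≤ ‖A.trace‖ + 3 * Real.sqrt (sig2 A) := by
    rw [S_eq A]
    refine (norm_add_le _ _).trans ?_
    have hone : ‖A.trace • (1 : lp (fun _ : FreeGroup (Fin k) => ℂ) 2 →L[ℂ]
        lp (fun _ : FreeGroup (Fin k) => ℂ) 2)‖ ≤ ‖A.trace‖ := by
      refine (norm_smul_le A.trace (1 : lp (fun _ : FreeGroup (Fin k) => ℂ) 2 →L[ℂ]
        lp (fun _ : FreeGroup (Fin k) => ℂ) 2)).trans ?_
      have h1 : ‖(1 : lp (fun _ : FreeGroup (Fin k) => ℂ) 2 →L[ℂ]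
          lp (fun _ : FreeGroup (Fin k) => ℂ) 2)‖ ≤ 1 := by
        rw [ContinuousLinearMap.one_def]
        exact ContinuousLinearMap.norm_id_le
      nlinarith [norm_nonneg A.trace]
    exact add_le_add hone (norm_T_le A)
  have hkpos : (0 : ℝ) ≤ (k : ℝ)⁻¹ := by positivity
  calc (k : ℝ)⁻¹ * ‖∑ i : Fin k, ∑ j : Fin k, A i j • lam (FreeGroup.of i * (FreeGroup.of j)⁻¹)‖
      ≤ (k : ℝ)⁻¹ * (‖A.trace‖ + 3 * Real.sqrt (sig2 A)) := by
        exact mul_le_mul_of_nonneg_left hS hkpos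
    _ = (k : ℝ)⁻¹ * ‖A.trace‖ + 3 / (k : ℝ) * Real.sqrt (sig2 A) := by ring
end
end

section
/- Let U_1, …, U_k be n×n unitary matrices and Φ_{k,n}(X)_{ij} = k^{-1} Tr(U_i X U_j^*). For every density matrix X ∈ D(ℂ^n) there exists a Hermitian matrix A = (a_{ij}) ∈ M_k(ℂ) with Tr A = 0 and ‖A‖₂ ≤ 1 such that ‖Φ_{k,n}(X) − I_k/k‖₂ ≤ k^{-1} ‖Σ_{i,j=1}^k a_{ij} U_i^* U_j‖, where ‖·‖₂ denotes the Frobenius norm and ‖·‖ the operator norm. -/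
open Matrix
open scoped Kronecker ComplexOrder

noncomputable section

/-- A density matrix: positive semidefinite with trace one. -/
def IsDensity {ι : Type*} [Fintype ι] (X : Matrix ι ι ℂ) : Prop :=
  X.PosSemidef ∧ X.trace = 1

/-- The Frobenius (Hilbert–Schmidt) norm of a matrix. -/
def frobNorm {ι κ : Type*} [Fintype ι] [Fintype κ] (A : Matrix ι κ ℂ) : ℝ :=
  Real.sqrt (∑ i, ∑ j, ‖A i j‖ ^ 2)

/-- The operator norm of a matrix acting on the standard Hermitian space `ℂ^ι`. -/
def opNorm {ι : Type*} [Fintype ι] [DecidableEq ι] (A : Matrix ι ι ℂ) : ℝ :=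
  ‖Matrix.toEuclideanCLM (𝕜 := ℂ) A‖

/-- The von Neumann entropy of a (Hermitian) matrix, `-∑ᵢ λᵢ log λᵢ`. -/
def vonNeumannEntropy {ι : Type*} [Fintype ι] [DecidableEq ι] (X : Matrix ι ι ℂ) : ℝ :=
  if h : X.IsHermitian then -∑ i, h.eigenvalues i * Real.log (h.eigenvalues i) else 0

/-- The minimum output entropy of a channel. -/
def Hmin {ι κ : Type*} [Fintype ι] [Fintype κ] [DecidableEq κ]
    (Φ : Matrix ι ι ℂ → Matrix κ κ ℂ) : ℝ :=
  sInf {h : ℝ | ∃ X : Matrix ι ι ℂ, IsDensity X ∧ h = vonNeumannEntropy (Φ X)}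

/-- The channel `Φ_{k,n}(X)_{ij} = k⁻¹ Tr(Uᵢ X Uⱼ*)` associated to a `k`-tuple of
`n × n` (unitary) matrices. -/
def channel {n k : ℕ} (U : Fin k → Matrix (Fin n) (Fin n) ℂ)
    (X : Matrix (Fin n) (Fin n) ℂ) : Matrix (Fin k) (Fin k) ℂ :=
  Matrix.of fun i j => (k : ℂ)⁻¹ * (U i * X * (U j)ᴴ).trace

/-- Entrywise complex conjugation of a matrix. -/
def conjMat {ι κ : Type*} (A : Matrix ι κ ℂ) : Matrix ι κ ℂ :=
  A.map (starRingEnd ℂ)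

/-- The tensor product channel `Φ_{k,n} ⊗ Φ̄_{k,n}`, acting on
`M_{n²}(ℂ) ≅ M_n(ℂ) ⊗ M_n(ℂ)` with values in `M_{k²}(ℂ)`. -/
def channelTensorConj {n k : ℕ} (U : Fin k → Matrix (Fin n) (Fin n) ℂ)
    (X : Matrix (Fin n × Fin n) (Fin n × Fin n) ℂ) :
    Matrix (Fin k × Fin k) (Fin k × Fin k) ℂ :=
  Matrix.of fun p q =>
    ((k : ℂ) ^ 2)⁻¹ *
      ((U p.1 ⊗ₖ conjMat (U p.2)) * X * ((U q.1 ⊗ₖ conjMat (U q.2)))ᴴ).trace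

end

open MeasureTheory ProbabilityTheory Filter

noncomputable instance matrixMeasurableSpace {m n : Type*} :
    MeasurableSpace (Matrix m n ℂ) :=
  inferInstanceAs (MeasurableSpace (m → n → ℂ))

lemma frobNorm_real_smul {ι κ : Type*} [Fintype ι] [Fintype κ] (c : ℝ) (hc : 0 ≤ c)
    (A : Matrix ι κ ℂ) : frobNorm ((c : ℂ) • A) = c * frobNorm A := by
  unfold frobNorm
  have h : ∀ i j, ‖((c : ℂ) • A) i j‖ ^ 2 = c ^ 2 * ‖A i j‖ ^ 2 := by
    intro i j
    rw [Matrix.smul_apply, norm_smul, Complex.norm_real, Real.norm_eq_abs, abs_of_nonneg hc,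
      mul_pow]
  simp_rw [h, ← Finset.mul_sum]
  rw [Real.sqrt_mul (by positivity), Real.sqrt_sq hc]

lemma star_mul_self_eq' (z : ℂ) : star z * z = ((‖z‖ ^ 2 : ℝ) : ℂ) := by
  rw [Complex.star_def, mul_comm, Complex.mul_conj, Complex.normSq_eq_norm_sq]

lemma star_trace_eq {m : Type*} [Fintype m] (C : Matrix m m ℂ) :
    (starRingEnd ℂ) C.trace = Cᴴ.trace := by
  rw [Matrix.trace_conjTranspose]; rfl

lemma trace_mul_le_opNorm' {n : ℕ} (M X : Matrix (Fin n) (Fin n) ℂ)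
    (h1 : X.PosSemidef) (h2 : X.trace = 1) :
    ‖(M * X).trace‖ ≤ ‖Matrix.toEuclideanCLM (𝕜 := ℂ) M‖ := by
  obtain ⟨B, hB⟩ := by
    open scoped MatrixOrder Matrix.Norms.L2Operator in
    exact CStarAlgebra.nonneg_iff_eq_star_mul_self.mp h1.nonneg
  rw [Matrix.star_eq_conjTranspose] at hB; subst hB
  set T := Matrix.toEuclideanCLM (𝕜 := ℂ) M
  set w : Fin n → EuclideanSpace ℂ (Fin n) :=
    fun i => (WithLp.equiv 2 _).symm (fun q => star (B i q)) with hw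
  have hinner : ∀ i, (B * M * Bᴴ) i i = inner ℂ (w i) (T (w i)) := by
    intro i
    simp only [Matrix.mul_apply, Matrix.conjTranspose_apply, PiLp.inner_apply,
      Matrix.toEuclideanCLM_toLp, T, w, WithLp.equiv_symm_apply,
      RCLike.inner_apply, Matrix.mulVec, dotProduct]
    simp only [Matrix.toLin'_apply, Matrix.mulVec, dotProduct, star_star, Finset.mul_sum,
      Finset.sum_mul]
    rw [Finset.sum_comm]
    exact Finset.sum_congr rfl fun q _ => Finset.sum_congr rfl fun p _ => by
      rw [starRingEnd_apply, star_star]; ring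
  have hwnorm : ∀ i, ‖w i‖ ^ 2 = ∑ q, ‖B i q‖ ^ 2 := by
    intro i
    rw [EuclideanSpace.norm_eq, Real.sq_sqrt (by positivity)]
    simp [w]
  have hsum1 : ∑ i, ∑ q, ‖B i q‖ ^ 2 = 1 := by
    have : ((∑ i, ∑ q, ‖B i q‖ ^ 2 : ℝ) : ℂ) = 1 := by
      rw [← h2]
      simp only [Matrix.trace, Matrix.diag, Matrix.mul_apply, Matrix.conjTranspose_apply,
        Complex.ofReal_sum]
      rw [Finset.sum_comm]
      refine Finset.sum_congr rfl fun i _ => Finset.sum_congr rfl fun q _ => ?_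
      rw [← starRingEnd_apply, mul_comm, Complex.mul_conj, Complex.normSq_eq_norm_sq]
    exact_mod_cast this
  have htr : (M * (Bᴴ * B)).trace = (B * M * Bᴴ).trace := by
    rw [← mul_assoc, Matrix.trace_mul_cycle]
  calc ‖(M * (Bᴴ * B)).trace‖ = ‖∑ i, inner ℂ (w i) (T (w i))‖ := by
        rw [htr]; congr 1; exact Finset.sum_congr rfl fun i _ => hinner i
    _ ≤ ∑ i, ‖(inner ℂ (w i) (T (w i)) : ℂ)‖ := norm_sum_le _ _
    _ ≤ ∑ i, ‖T‖ * ‖w i‖ ^ 2 := by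
        refine Finset.sum_le_sum fun i _ => ?_
        calc ‖(inner ℂ (w i) (T (w i)) : ℂ)‖ ≤ ‖w i‖ * ‖T (w i)‖ := norm_inner_le_norm _ _
          _ ≤ ‖w i‖ * (‖T‖ * ‖w i‖) :=
              mul_le_mul_of_nonneg_left (T.le_opNorm _) (norm_nonneg _)
          _ = ‖T‖ * ‖w i‖ ^ 2 := by ring
    _ = ‖T‖ := by
        rw [← Finset.mul_sum]
        simp_rw [hwnorm]
        rw [hsum1, mul_one]

/-- For every density matrix `X` there is a traceless Hermitian matrix `A` with
`‖A‖₂ ≤ 1` such that `‖Φ_{k,n}(X) − I_k/k‖₂ ≤ k⁻¹ ‖∑_{i,j} a_{ij} Uᵢ* Uⱼ‖`. -/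
theorem exists_dual_matrix {n k : ℕ} (hk : 1 ≤ k)
    (U : Fin k → Matrix (Fin n) (Fin n) ℂ)
    (hU : ∀ i, U i ∈ Matrix.unitaryGroup (Fin n) ℂ)
    (X : Matrix (Fin n) (Fin n) ℂ) (hX : IsDensity X) :
    ∃ A : Matrix (Fin k) (Fin k) ℂ, A.IsHermitian ∧ A.trace = 0 ∧ frobNorm A ≤ 1 ∧
      frobNorm (channel U X - (k : ℂ)⁻¹ • (1 : Matrix (Fin k) (Fin k) ℂ)) ≤
        (k : ℝ)⁻¹ * opNorm (∑ i : Fin k, ∑ j : Fin k, A i j • ((U i)ᴴ * U j)) := by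
  have hk0 : (k : ℂ) ≠ 0 := Nat.cast_ne_zero.mpr (by omega)
  have hXh : X.IsHermitian := hX.1.isHermitian
  set Φ := channel U X with hΦ
  set B := Φ - (k : ℂ)⁻¹ • (1 : Matrix (Fin k) (Fin k) ℂ) with hBdef
  -- Φ is Hermitian
  have hΦH : Φ.IsHermitian := by
    unfold Matrix.IsHermitian
    ext i j
    simp only [Matrix.conjTranspose_apply, hΦ, channel, Matrix.of_apply]
    rw [star_mul']
    congr 1
    · simp
    · rw [← starRingEnd_apply, star_trace_eq]
      congr 1
      rw [Matrix.conjTranspose_mul, Matrix.conjTranspose_mul, Matrix.conjTranspose_conjTranspose,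
        hXh.eq, mul_assoc]
  have hBH : B.IsHermitian := by
    unfold Matrix.IsHermitian
    rw [hBdef, Matrix.conjTranspose_sub, hΦH.eq, Matrix.conjTranspose_smul,
      Matrix.conjTranspose_one]
    congr 1
    simp [map_inv₀, Complex.conj_natCast]
  -- trace of B is zero
  have htrΦ : Φ.trace = 1 := by
    have h1 : ∀ i : Fin k, Φ i i = (k : ℂ)⁻¹ := by
      intro i
      simp only [hΦ, channel, Matrix.of_apply]
      rw [Matrix.trace_mul_cycle, ← Matrix.star_eq_conjTranspose, (hU i).1, one_mul, hX.2,
        mul_one]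
    simp only [Matrix.trace, Matrix.diag, h1, Finset.sum_const, Finset.card_univ,
      Fintype.card_fin, nsmul_eq_mul]
    rw [mul_inv_cancel₀ hk0]
  have htrB : B.trace = 0 := by
    rw [hBdef, Matrix.trace_sub, htrΦ, Matrix.trace_smul, Matrix.trace_one]
    rw [smul_eq_mul, Fintype.card_fin, inv_mul_cancel₀ hk0, sub_self]
  by_cases hB0 : B = 0
  · refine ⟨0, Matrix.isHermitian_zero, by simp, by simp [frobNorm], ?_⟩
    rw [hB0]
    have h0 : frobNorm (0 : Matrix (Fin k) (Fin k) ℂ) = 0 := by simp [frobNorm]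
    rw [h0]
    exact mul_nonneg (inv_nonneg.mpr (Nat.cast_nonneg k)) (norm_nonneg _)
  · -- B ≠ 0; normalize
    set s : ℝ := ∑ i, ∑ j, ‖B i j‖ ^ 2 with hs
    have hs_nonneg : 0 ≤ s := by positivity
    have hs_pos : 0 < s := by
      rcases hs_nonneg.lt_or_eq with h | h
      · exact h
      · exfalso; apply hB0
        ext i j
        have h0 : ∀ i ∈ Finset.univ, ∀ j ∈ (Finset.univ : Finset (Fin k)), ‖B i j‖ ^ 2 = 0 := by
          have := (Finset.sum_eq_zero_iff_of_nonneg (fun i _ => by positivity)).mp h.symm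
          intro i hi j hj
          have := this i hi
          exact (Finset.sum_eq_zero_iff_of_nonneg (fun j _ => by positivity)).mp this j hj
        have := h0 i (Finset.mem_univ i) j (Finset.mem_univ j)
        simpa using this
    set t : ℝ := Real.sqrt s with ht
    have ht_pos : 0 < t := Real.sqrt_pos.mpr hs_pos
    have ht_sq : t ^ 2 = s := Real.sq_sqrt hs_nonneg
    have htC : (t : ℂ) ≠ 0 := by exact_mod_cast ht_pos.ne'
    set A : Matrix (Fin k) (Fin k) ℂ := ((t : ℂ))⁻¹ • B with hA
    refine ⟨A, ?_, ?_, ?_, ?_⟩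
    · unfold Matrix.IsHermitian
      rw [hA, Matrix.conjTranspose_smul, hBH.eq]
      simp
    · rw [hA, Matrix.trace_smul, htrB, smul_zero]
    · have hfB : frobNorm B = t := by unfold frobNorm; rw [ht, hs]
      have hA' : A = ((t⁻¹ : ℝ) : ℂ) • B := by rw [hA, Complex.ofReal_inv]
      rw [hA', frobNorm_real_smul _ (inv_nonneg.mpr ht_pos.le) _, hfB,
        inv_mul_cancel₀ ht_pos.ne']
    · -- the main inequality
      set M : Matrix (Fin n) (Fin n) ℂ := ∑ i : Fin k, ∑ j : Fin k, A i j • ((U i)ᴴ * U j) with hM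
      have key : (A * B).trace = (k : ℂ)⁻¹ * (M * X).trace := by
        have h1 : (A * B).trace = (A * Φ).trace := by
          rw [hBdef, mul_sub, Matrix.trace_sub, Matrix.mul_smul, Matrix.mul_one,
            Matrix.trace_smul, hA, Matrix.trace_smul, htrB, smul_zero, smul_zero, sub_zero]
        rw [h1]
        have h2 : (M * X).trace = ∑ i : Fin k, ∑ j : Fin k, A i j * ((U i)ᴴ * U j * X).trace := by
          rw [hM, Finset.sum_mul, Matrix.trace_sum]
          refine Finset.sum_congr rfl fun i _ => ?_
          rw [Finset.sum_mul, Matrix.trace_sum]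
          refine Finset.sum_congr rfl fun j _ => ?_
          rw [Matrix.smul_mul, Matrix.trace_smul, smul_eq_mul]
        rw [h2]
        have h3 : (A * Φ).trace = ∑ i : Fin k, ∑ j : Fin k, A i j * Φ j i := by
          simp only [Matrix.trace, Matrix.diag, Matrix.mul_apply]
        rw [h3, Finset.mul_sum]
        refine Finset.sum_congr rfl fun i _ => ?_
        rw [Finset.mul_sum]
        refine Finset.sum_congr rfl fun j _ => ?_
        simp only [hΦ, channel, Matrix.of_apply]
        rw [Matrix.trace_mul_cycle]
        ring
      have hABt : (A * B).trace = (t : ℂ) := by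
        have hBB : B * B = Bᴴ * B := by rw [hBH.eq]
        have htrBB : (Bᴴ * B).trace = (s : ℂ) := by
          simp only [Matrix.trace, Matrix.diag, Matrix.mul_apply, Matrix.conjTranspose_apply,
            hs, Complex.ofReal_sum]
          rw [Finset.sum_comm]
          refine Finset.sum_congr rfl fun i _ => Finset.sum_congr rfl fun q _ => ?_
          exact star_mul_self_eq' (B i q)
        rw [hA, Matrix.smul_mul, Matrix.trace_smul, hBB, htrBB, smul_eq_mul]
        rw [← ht_sq]
        push_cast
        field_simp
      -- conclude
      have hfrob : frobNorm (Φ - (k : ℂ)⁻¹ • (1 : Matrix (Fin k) (Fin k) ℂ)) = t := rfl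
      rw [hfrob]
      have : t = ‖(A * B).trace‖ := by
        rw [hABt, Complex.norm_real, Real.norm_eq_abs, abs_of_pos ht_pos]
      rw [this, key, norm_mul, norm_inv, Complex.norm_natCast]
      have hle := trace_mul_le_opNorm' M X hX.1 hX.2
      unfold opNorm
      gcongr
end

section
/- Let U_1, …, U_k be n×n unitary matrices, let Φ_{k,n}(X)_{ij} = k^{-1} Tr(U_i X U_j^*) and let the conjugate channel be Φ̄_{k,n}(X)_{ij} = k^{-1} Tr(Ū_i X Ū_j^*), where Ū denotes entrywise complex conjugation. Let β_n = n^{-1/2} Σ_{a=1}^n e_a ⊗ e_a ∈ ℂ^n ⊗ ℂ^n and β_k = k^{-1/2} Σ_{i=1}^k f_i ⊗ f_i ∈ ℂ^k ⊗ ℂ^k be the maximally entangled unit vectors. Then ⟨β_k, (Φ_{k,n} ⊗ Φ̄_{k,n})(β_n β_n^*) β_k⟩ = 1/k, where (Φ ⊗ Φ̄)(X)_{(i,i'),(j,j')} = k^{-2} Tr((U_i ⊗ Ū_{i'}) X (U_j ⊗ Ū_{j'})^*) for X ∈ M_{n²}(ℂ) ≅ M_n(ℂ) ⊗ M_n(ℂ).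 -/
open Matrix
open scoped Kronecker ComplexOrder

open MeasureTheory ProbabilityTheory Filter

/-- The maximally entangled unit vector `d^{-1/2} ∑ₐ eₐ ⊗ eₐ ∈ ℂ^d ⊗ ℂ^d`. -/
noncomputable def bell (d : ℕ) : Fin d × Fin d → ℂ := fun p =>
  if p.1 = p.2 then (Real.sqrt d : ℂ)⁻¹ else 0


section Aux
open scoped Kronecker

lemma star_bell (d : ℕ) : star (bell d) = bell d := by
  funext p
  simp only [Pi.star_apply, bell]
  split <;> simp [← Complex.ofReal_inv]

lemma trace_mul_vecMulVec_mul {m : Type*} [Fintype m] (A C : Matrix m m ℂ) (u v : m → ℂ) :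
    (A * Matrix.vecMulVec u v * C).trace = (A.mulVec u) ⬝ᵥ (Matrix.vecMul v C) := by
  simp only [Matrix.trace, Matrix.diag, Matrix.mul_apply, Matrix.vecMulVec_apply,
    Matrix.mulVec, Matrix.vecMul, dotProduct, Finset.sum_mul, Finset.mul_sum]
  refine Finset.sum_congr rfl fun x _ => ?_
  refine Finset.sum_congr rfl fun j _ => Finset.sum_congr rfl fun i _ => ?_
  ring

lemma kron_mulVec_bell {n : ℕ} (U : Matrix (Fin n) (Fin n) ℂ)
    (hU : U ∈ Matrix.unitaryGroup (Fin n) ℂ) :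
    (U ⊗ₖ conjMat U).mulVec (bell n) = bell n := by
  have h1 : U * Uᴴ = 1 := by
    have := Matrix.mem_unitaryGroup_iff.mp hU
    simpa [Matrix.star_eq_conjTranspose] using this
  funext ab
  obtain ⟨a, b⟩ := ab
  have h0 : ((U ⊗ₖ conjMat U).mulVec (bell n)) (a, b)
      = ∑ c, ∑ d, U a c * conjMat U b d * bell n (c, d) := by
    simp [Matrix.mulVec, dotProduct, Fintype.sum_prod_type,
      Matrix.kroneckerMap_apply]
  rw [h0]
  have h2 : ∀ c : Fin n, ∑ d, U a c * conjMat U b d * bell n (c, d)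
      = U a c * conjMat U b c * (Real.sqrt n : ℂ)⁻¹ := by
    intro c
    rw [Finset.sum_eq_single c]
    · simp [bell]
    · intro d _ hd
      simp [bell, (Ne.symm hd : ¬ c = d)]
    · simp
  simp only [h2]
  have h3 : ∑ c, U a c * conjMat U b c = (U * Uᴴ) a b := by
    simp [Matrix.mul_apply, conjMat, Matrix.conjTranspose_apply]
  rw [← Finset.sum_mul, h3, h1]
  by_cases hab : a = b <;> simp [bell, hab, Matrix.one_apply]

lemma bell_dot_bell {n : ℕ} (hn : 1 ≤ n) : bell n ⬝ᵥ bell n = 1 := by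
  have hs : ((Real.sqrt n : ℂ))⁻¹ * ((Real.sqrt n : ℂ))⁻¹ = (n : ℂ)⁻¹ := by
    rw [← Complex.ofReal_inv, ← Complex.ofReal_mul,
      ← mul_inv, Real.mul_self_sqrt (Nat.cast_nonneg n)]
    simp
  have hb : ∀ p : Fin n × Fin n, bell n p * bell n p
      = if p.1 = p.2 then (n : ℂ)⁻¹ else 0 := by
    intro p
    simp only [bell]
    split <;> simp [hs]
  simp only [dotProduct, hb, Fintype.sum_prod_type, Finset.sum_ite_eq,
    Finset.mem_univ, if_true]
  rw [Finset.sum_const, Finset.card_univ, Fintype.card_fin, nsmul_eq_mul,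
    mul_inv_cancel₀]
  exact_mod_cast Nat.one_le_iff_ne_zero.mp hn

end Aux

/-- `⟨β_k, (Φ_{k,n} ⊗ Φ̄_{k,n})(β_n β_n*) β_k⟩ = 1/k`. -/
theorem bell_state_overlap {n k : ℕ} (hn : 1 ≤ n) (hk : 1 ≤ k)
    (U : Fin k → Matrix (Fin n) (Fin n) ℂ)
    (hU : ∀ i, U i ∈ Matrix.unitaryGroup (Fin n) ℂ) :
    star (bell k) ⬝ᵥ
        (channelTensorConj U (Matrix.vecMulVec (bell n) (star (bell n)))).mulVec (bell k) =
      (k : ℂ)⁻¹ := by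
  set M := channelTensorConj U (Matrix.vecMulVec (bell n) (star (bell n))) with hMdef
  have hM : ∀ i j : Fin k, M (i, i) (j, j) = ((k : ℂ) ^ 2)⁻¹ := by
    intro i j
    have hA : (U i ⊗ₖ conjMat (U i)).mulVec (bell n) = bell n := kron_mulVec_bell _ (hU i)
    have hB : (U j ⊗ₖ conjMat (U j)).mulVec (bell n) = bell n := kron_mulVec_bell _ (hU j)
    have hv : Matrix.vecMul (star (bell n)) ((U j ⊗ₖ conjMat (U j)))ᴴ = bell n := by
      rw [← Matrix.star_mulVec, hB, star_bell]
    simp only [hMdef, channelTensorConj, Matrix.of_apply, trace_mul_vecMulVec_mul, star_bell,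
      hA]
    rw [← star_bell n, hv, star_bell, bell_dot_bell hn, mul_one]
  have hterm : ∀ p q : Fin k × Fin k,
      star (bell k) p * (M p q * bell k q)
        = (if p.1 = p.2 then (Real.sqrt k : ℂ)⁻¹ else 0)
          * (if q.1 = q.2 then ((k : ℂ) ^ 2)⁻¹ * (Real.sqrt k : ℂ)⁻¹ else 0) := by
    intro p q
    rw [show star (bell k) p = bell k p from congrFun (star_bell k) p]
    by_cases hp : p.1 = p.2
    · by_cases hq : q.1 = q.2
      · obtain ⟨i, i'⟩ := p; obtain ⟨j, j'⟩ := q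
        simp only at hp hq
        subst hp; subst hq
        rw [hM]
        simp [bell]
        try ring
      · simp [bell, hp, hq]
    · simp [bell, hp]
  have hsum : ∀ c : ℂ, ∑ p : Fin k × Fin k, (if p.1 = p.2 then c else 0) = (k : ℂ) * c := by
    intro c
    rw [Fintype.sum_prod_type]
    simp [Finset.sum_ite_eq, Finset.mul_sum]
  have hk0 : (k : ℂ) ≠ 0 := by exact_mod_cast Nat.one_le_iff_ne_zero.mp hk
  have hsk : ((Real.sqrt k : ℂ))⁻¹ * ((Real.sqrt k : ℂ))⁻¹ = (k : ℂ)⁻¹ := by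
    rw [← Complex.ofReal_inv, ← Complex.ofReal_mul,
      ← mul_inv, Real.mul_self_sqrt (Nat.cast_nonneg k)]
    simp
  calc star (bell k) ⬝ᵥ M.mulVec (bell k)
      = ∑ p : Fin k × Fin k, ∑ q : Fin k × Fin k, star (bell k) p * (M p q * bell k q) := by
        simp [dotProduct, Matrix.mulVec, Finset.mul_sum]
    _ = (∑ p : Fin k × Fin k, (if p.1 = p.2 then (Real.sqrt k : ℂ)⁻¹ else 0))
         * (∑ q : Fin k × Fin k, (if q.1 = q.2 then ((k : ℂ) ^ 2)⁻¹ * (Real.sqrt k : ℂ)⁻¹ else 0)) := by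
        rw [Finset.sum_mul_sum]
        exact Finset.sum_congr rfl fun p _ => Finset.sum_congr rfl fun q _ => hterm p q
    _ = ((k : ℂ) * (Real.sqrt k : ℂ)⁻¹) * ((k : ℂ) * (((k : ℂ) ^ 2)⁻¹ * (Real.sqrt k : ℂ)⁻¹)) := by
        rw [hsum, hsum]
    _ = (k : ℂ)⁻¹ := by
        rw [show ((k : ℂ) * ((Real.sqrt k : ℂ))⁻¹) * ((k : ℂ) * (((k : ℂ) ^ 2)⁻¹ * ((Real.sqrt k : ℂ))⁻¹))
            = ((k : ℂ) * (k : ℂ) * (((k : ℂ) ^ 2)⁻¹)) * (((Real.sqrt k : ℂ))⁻¹ * ((Real.sqrt k : ℂ))⁻¹) from by ring,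
          hsk, ← pow_two, mul_inv_cancel₀ (pow_ne_zero 2 hk0), one_mul]
end

section
/- For every k ≥ 1 and every density matrix X ∈ D(ℂ^k), one has log k − H(X) ≤ k · Tr((X − I_k/k)²), where H(X) is the von Neumann entropy of X and I_k/k is the maximally mixed state. -/
open Matrix
open scoped Kronecker ComplexOrder

open MeasureTheory ProbabilityTheory Filter

/-- For every density matrix `X ∈ D(ℂ^k)`,
`log k − H(X) ≤ k · Tr((X − I_k/k)²)`. -/
theorem entropy_defect_le_trace_sq {k : ℕ} (hk : 1 ≤ k)
    (X : Matrix (Fin k) (Fin k) ℂ) (hX : IsDensity X) :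
    Real.log k - vonNeumannEntropy X ≤
      k * (((X - (k : ℂ)⁻¹ • (1 : Matrix (Fin k) (Fin k) ℂ)) ^ 2).trace).re := by
  obtain ⟨hpsd, htr⟩ := hX
  have h : X.IsHermitian := hpsd.1
  set lam := h.eigenvalues with hlam
  set U : Matrix (Fin k) (Fin k) ℂ := (h.eigenvectorUnitary : Matrix (Fin k) (Fin k) ℂ) with hUdef
  have hU : star U * U = 1 := (Matrix.mem_unitaryGroup_iff').mp (h.eigenvectorUnitary).2
  have hU' : U * star U = 1 := (Matrix.mem_unitaryGroup_iff).mp (h.eigenvectorUnitary).2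
  have hconj : ∀ A : Matrix (Fin k) (Fin k) ℂ, (U * A * star U).trace = A.trace := by
    intro A
    rw [trace_mul_cycle, hU, one_mul]
  have key : X - (k : ℂ)⁻¹ • (1 : Matrix (Fin k) (Fin k) ℂ)
      = U * diagonal (fun i => (lam i : ℂ) - (k : ℂ)⁻¹) * star U := by
    have h1 : U * ((k : ℂ)⁻¹ • (1 : Matrix (Fin k) (Fin k) ℂ)) * star U
        = (k : ℂ)⁻¹ • (1 : Matrix (Fin k) (Fin k) ℂ) := by
      rw [Matrix.mul_smul, mul_one, smul_mul_assoc, hU']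
    have h2 : (diagonal (RCLike.ofReal ∘ h.eigenvalues) : Matrix (Fin k) (Fin k) ℂ)
        - (k : ℂ)⁻¹ • 1 = diagonal (fun i => (lam i : ℂ) - (k : ℂ)⁻¹) := by
      ext i j
      by_cases hij : i = j <;>
        simp [diagonal, hij, hlam, Matrix.one_apply, Matrix.smul_apply, Matrix.sub_apply]
    conv_lhs => rw [h.spectral_theorem, Unitary.conjStarAlgAut_apply, ← hUdef, ← h1]
    rw [← sub_mul, ← mul_sub, h2]
  have hsq : (U * diagonal (fun i => (lam i : ℂ) - (k : ℂ)⁻¹) * star U)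
      * (U * diagonal (fun i => (lam i : ℂ) - (k : ℂ)⁻¹) * star U)
      = U * (diagonal (fun i => (lam i : ℂ) - (k : ℂ)⁻¹)
          * diagonal (fun i => (lam i : ℂ) - (k : ℂ)⁻¹)) * star U := by
    rw [mul_assoc (U * _) (star U) (U * _ * star U), ← mul_assoc (star U) (U * _) (star U),
      ← mul_assoc (star U) U _, hU, one_mul]
    simp only [← mul_assoc]
  have htrsq : ((X - (k : ℂ)⁻¹ • (1 : Matrix (Fin k) (Fin k) ℂ)) ^ 2).trace
      = ∑ i, ((lam i : ℂ) - (k : ℂ)⁻¹) ^ 2 := by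
    rw [key, pow_two, hsq, hconj, diagonal_mul_diagonal, trace_diagonal]
    simp [pow_two]
  have hsum : ∑ i, lam i = 1 := by
    have h2 : X.trace = ∑ i, (lam i : ℂ) := by
      conv_lhs => rw [h.spectral_theorem, Unitary.conjStarAlgAut_apply, ← hUdef]
      rw [hconj, trace_diagonal]
      rfl
    exact_mod_cast (h2.symm.trans htr)
  have hnn : ∀ i, 0 ≤ lam i := fun i => hpsd.eigenvalues_nonneg i
  have hcast : (∑ i, ((lam i : ℂ) - (k : ℂ)⁻¹) ^ 2)
      = ((∑ i, (lam i - (k : ℝ)⁻¹) ^ 2 : ℝ) : ℂ) := by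
    push_cast
    ring
  rw [vonNeumannEntropy, dif_pos h, htrsq, hcast, Complex.ofReal_re]
  have hk' : (0 : ℝ) < k := Nat.cast_pos.mpr hk
  have hkne : (k : ℝ) ≠ 0 := ne_of_gt hk'
  have hrw : (k : ℝ) * ∑ i, (lam i - (k : ℝ)⁻¹) ^ 2
      = ∑ i, ((k : ℝ) * (lam i) ^ 2 - lam i) := by
    rw [Finset.mul_sum]
    have hterm : ∀ i ∈ Finset.univ, (k : ℝ) * (lam i - (k : ℝ)⁻¹) ^ 2
        = ((k : ℝ) * (lam i) ^ 2 - lam i) + ((k : ℝ)⁻¹ - lam i) := by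
      intro i _
      field_simp
      ring
    rw [Finset.sum_congr rfl hterm, Finset.sum_add_distrib]
    have h0 : ∑ i : Fin k, ((k : ℝ)⁻¹ - lam i) = 0 := by
      rw [Finset.sum_sub_distrib, hsum, Finset.sum_const, Finset.card_univ, Fintype.card_fin,
        nsmul_eq_mul]
      field_simp
      ring
    rw [h0, add_zero]
  rw [sub_neg_eq_add]
  have hlogk : Real.log k = ∑ i, lam i * Real.log k := by
    rw [← Finset.sum_mul, hsum, one_mul]
  rw [hlogk, ← Finset.sum_add_distrib, hrw]
  apply Finset.sum_le_sum
  intro i _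
  rcases (hnn i).eq_or_lt with h0 | hpos
  · simp only [← hlam]
    simp [← h0]
  · have hkt : (0 : ℝ) < (k : ℝ) * lam i := mul_pos hk' hpos
    have hle := Real.log_le_sub_one_of_pos hkt
    rw [Real.log_mul hkne (ne_of_gt hpos)] at hle
    nlinarith [mul_le_mul_of_nonneg_left hle (hnn i)]
end

section
/- Let d ≥ 2 and let ρ ∈ D(ℂ^d) be a density matrix such that ⟨v, ρ v⟩ ≥ λ for some unit vector v ∈ ℂ^d and some λ with 1/d ≤ λ < 1. Then the von Neumann entropy of ρ satisfies H(ρ) ≤ −λ log λ + (1−λ) log((d−1)/(1−λ)). -/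
open Matrix
open scoped Kronecker ComplexOrder

open MeasureTheory ProbabilityTheory Filter

section Aux

open Real Finset

/-- Jensen's inequality for `negMulLog` over a finite set. -/
lemma aux_jensen_negMulLog {ι : Type*} (t : Finset ι) (ht : t.Nonempty)
    (p : ι → ℝ) (hp : ∀ i ∈ t, 0 ≤ p i) :
    ∑ i ∈ t, Real.negMulLog (p i) ≤
      (t.card : ℝ) * Real.negMulLog ((∑ i ∈ t, p i) / t.card) := by
  have hc : (0:ℝ) < t.card := by exact_mod_cast ht.card_pos
  have hkey := Real.concaveOn_negMulLog.le_map_sum (t := t)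
    (w := fun _ => ((t.card : ℝ))⁻¹) (p := p)
    (fun i _ => by positivity)
    (by simp [Finset.sum_const, mul_inv_cancel₀ hc.ne'])
    (fun i hi => hp i hi)
  have h1 : ∑ i ∈ t, ((t.card : ℝ))⁻¹ • Real.negMulLog (p i)
      = ((t.card : ℝ))⁻¹ * ∑ i ∈ t, Real.negMulLog (p i) := by
    rw [← Finset.smul_sum]; simp [smul_eq_mul]
  have h2 : ∑ i ∈ t, ((t.card : ℝ))⁻¹ • p i = (∑ i ∈ t, p i) / t.card := by
    rw [← Finset.smul_sum]; simp [smul_eq_mul, div_eq_inv_mul]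
  rw [h1, h2] at hkey
  calc ∑ i ∈ t, Real.negMulLog (p i)
      = (t.card : ℝ) * (((t.card : ℝ))⁻¹ * ∑ i ∈ t, Real.negMulLog (p i)) := by
        field_simp
    _ ≤ (t.card : ℝ) * Real.negMulLog ((∑ i ∈ t, p i) / t.card) := by
        exact mul_le_mul_of_nonneg_left hkey hc.le

lemma aux_scale_negMulLog {s c : ℝ} (hs : 0 ≤ s) (hc : 0 < c) :
    c * Real.negMulLog (s / c) = Real.negMulLog s + s * Real.log c := by
  rcases eq_or_lt_of_le hs with h | h
  · simp [← h]
  · rw [Real.negMulLog, Real.negMulLog, Real.log_div h.ne' hc.ne']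
    field_simp
    ring

/-- The function `t ↦ -t log t - (1-t) log (1-t) + (1-t) log c` is antitone on
`[ (c+1)⁻¹, 1 ]` for `c ≥ 1`. -/
lemma aux_g_antitone {c : ℝ} (hc : 1 ≤ c) :
    AntitoneOn (fun t : ℝ =>
        Real.negMulLog t + Real.negMulLog (1 - t) + (1 - t) * Real.log c)
      (Set.Icc (c + 1)⁻¹ 1) := by
  have hc0 : (0:ℝ) < c := by linarith
  have hcc : (0:ℝ) < c + 1 := by linarith
  apply antitoneOn_of_deriv_nonpos (convex_Icc _ _)
  · fun_prop
  · rw [interior_Icc]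
    intro x hx
    obtain ⟨hx1, hx2⟩ := hx
    have hx0 : 0 < x := lt_trans (by positivity) hx1
    have h1x : 0 < 1 - x := by linarith
    exact (((Real.differentiableAt_negMulLog hx0.ne').add
      ((Real.differentiableAt_negMulLog h1x.ne').comp x
        ((differentiableAt_id.const_sub 1)))).add
      ((differentiableAt_id.const_sub 1).mul_const _)).differentiableWithinAt
  · rw [interior_Icc]
    intro x hx
    obtain ⟨hx1, hx2⟩ := hx
    have hx0 : 0 < x := lt_trans (by positivity) hx1
    have h1x : 0 < 1 - x := by linarith
    have hD : HasDerivAt (fun t : ℝ =>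
        Real.negMulLog t + Real.negMulLog (1 - t) + (1 - t) * Real.log c)
        ((-Real.log x - 1) + (-Real.log (1 - x) - 1) * (-1) + (-1) * Real.log c) x := by
      refine HasDerivAt.add (HasDerivAt.add (Real.hasDerivAt_negMulLog hx0.ne') ?_) ?_
      · exact (Real.hasDerivAt_negMulLog h1x.ne').comp x ((hasDerivAt_id x).const_sub 1)
      · exact ((hasDerivAt_id x).const_sub 1).mul_const _
    rw [hD.deriv]
    have hlog : Real.log (1 - x) ≤ Real.log (x * c) := by
      apply Real.log_le_log h1x
      have : 1 ≤ x * (c + 1) := by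
        calc (1:ℝ) = (c+1)⁻¹ * (c+1) := by field_simp
          _ ≤ x * (c + 1) := by
            exact mul_le_mul_of_nonneg_right hx1.le hcc.le
      nlinarith
    rw [Real.log_mul hx0.ne' hc0.ne'] at hlog
    nlinarith

end Aux

/-- If a density matrix `ρ ∈ D(ℂ^d)` satisfies `⟨v, ρ v⟩ ≥ λ` for a unit vector `v` and
some `1/d ≤ λ < 1`, then `H(ρ) ≤ −λ log λ + (1−λ) log((d−1)/(1−λ))`. -/
theorem entropy_bound_of_large_eigenvector {d : ℕ} (hd : 2 ≤ d)
    (ρ : Matrix (Fin d) (Fin d) ℂ) (hρ : IsDensity ρ)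
    (v : Fin d → ℂ) (hv : ∑ i, ‖v i‖ ^ 2 = 1)
    (lam : ℝ) (hlam₁ : (d : ℝ)⁻¹ ≤ lam) (hlam₂ : lam < 1)
    (hvρ : (lam : ℂ) ≤ star v ⬝ᵥ ρ.mulVec v) :
    vonNeumannEntropy ρ ≤
      -lam * Real.log lam + (1 - lam) * Real.log ((d - 1) / (1 - lam)) := by
  classical
  have hPSD := hρ.1
  have h : ρ.IsHermitian := hPSD.1
  set p : Fin d → ℝ := h.eigenvalues with hpdef
  have hpnn : ∀ i, 0 ≤ p i := fun i => hPSD.eigenvalues_nonneg i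
  have hd1 : (1:ℝ) ≤ (d:ℝ) - 1 := by
    have : (2:ℝ) ≤ (d:ℝ) := by exact_mod_cast hd
    linarith
  have hd0 : (0:ℝ) < (d:ℝ) - 1 := by linarith
  -- sum of eigenvalues is 1
  have hsum : ∑ i, p i = 1 := by
    have htr : ρ.trace = ∑ i, (p i : ℂ) := by
      conv_lhs => rw [h.spectral_theorem, Unitary.conjStarAlgAut_apply]
      rw [Matrix.trace_mul_cycle,
        (Matrix.mem_unitaryGroup_iff').mp (h.eigenvectorUnitary).2, Matrix.one_mul,
        Matrix.trace_diagonal]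
      rfl
    rw [hρ.2] at htr
    have : ((1:ℝ) : ℂ) = ((∑ i, p i : ℝ) : ℂ) := by
      push_cast
      exact htr
    exact_mod_cast this.symm
  -- the largest eigenvalue
  obtain ⟨i0, -, hi0⟩ := Finset.exists_max_image Finset.univ p
    ⟨⟨0, by omega⟩, Finset.mem_univ _⟩
  set μ : ℝ := p i0 with hμdef
  have hi0' : ∀ i, p i ≤ μ := fun i => hi0 i (Finset.mem_univ i)
  have hμ1 : μ ≤ 1 := by
    rw [← hsum]
    exact Finset.single_le_sum (fun i _ => hpnn i) (Finset.mem_univ i0)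
  -- the quadratic form evaluation
  set U : Matrix (Fin d) (Fin d) ℂ := (h.eigenvectorUnitary : Matrix (Fin d) (Fin d) ℂ)
    with hUdef
  set w : Fin d → ℂ := star U *ᵥ v with hwdef
  have hsw : star w = star v ᵥ* U := by
    rw [hwdef, Matrix.star_mulVec, Matrix.star_eq_conjTranspose, Matrix.conjTranspose_conjTranspose]
  have hquad : star v ⬝ᵥ ρ.mulVec v = ((∑ i, p i * ‖w i‖^2 : ℝ) : ℂ) := by
    have e0 : ρ.mulVec v = U *ᵥ (Matrix.diagonal (RCLike.ofReal ∘ h.eigenvalues) *ᵥ w) := by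
      conv_lhs => rw [h.spectral_theorem, Unitary.conjStarAlgAut_apply]
      rw [← hUdef, hwdef, Matrix.mulVec_mulVec, Matrix.mulVec_mulVec]
    rw [e0, Matrix.dotProduct_mulVec, ← hsw, Complex.ofReal_sum, dotProduct]
    refine Finset.sum_congr rfl fun i _ => ?_
    rw [Matrix.mulVec_diagonal, Pi.star_apply, ← mul_assoc,
      mul_comm (star (w i)), mul_assoc, RCLike.star_def, Complex.conj_mul']
    simp only [Function.comp_apply, hpdef, RCLike.ofReal_alg, Complex.real_smul, mul_one]
    push_cast
    ring
  -- norm preservation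
  have hwnorm : ∑ i, ‖w i‖^2 = 1 := by
    have h1 : ((∑ i, ‖w i‖^2 : ℝ) : ℂ) = star w ⬝ᵥ w := by
      rw [dotProduct, Complex.ofReal_sum]
      refine Finset.sum_congr rfl fun i _ => ?_
      rw [Pi.star_apply, RCLike.star_def, Complex.conj_mul']
      push_cast; ring
    have h2 : ((∑ i, ‖v i‖^2 : ℝ) : ℂ) = star v ⬝ᵥ v := by
      rw [dotProduct, Complex.ofReal_sum]
      refine Finset.sum_congr rfl fun i _ => ?_
      rw [Pi.star_apply, RCLike.star_def, Complex.conj_mul']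
      push_cast; ring
    have h3 : star w ⬝ᵥ w = star v ⬝ᵥ v := by
      rw [hsw, hwdef, Matrix.dotProduct_mulVec, Matrix.vecMul_vecMul,
        (Matrix.mem_unitaryGroup_iff).mp (h.eigenvectorUnitary).2]
      simp [Matrix.vecMul_one]
    have : ((∑ i, ‖w i‖^2 : ℝ) : ℂ) = ((∑ i, ‖v i‖^2 : ℝ) : ℂ) := by
      rw [h1, h2, h3]
    have := Complex.ofReal_injective this
    rw [this, hv]
  -- lam ≤ μ
  have hlamμ : lam ≤ μ := by
    have hle : lam ≤ ∑ i, p i * ‖w i‖^2 := by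
      rw [hquad] at hvρ
      exact_mod_cast hvρ
    calc lam ≤ ∑ i, p i * ‖w i‖^2 := hle
      _ ≤ ∑ i, μ * ‖w i‖^2 := by
          apply Finset.sum_le_sum
          intro i _
          exact mul_le_mul_of_nonneg_right (hi0' i) (by positivity)
      _ = μ := by rw [← Finset.mul_sum, hwnorm, mul_one]
  have hμd : ((d:ℝ))⁻¹ ≤ μ := le_trans hlam₁ hlamμ
  -- entropy as sum of negMulLog
  have hent : vonNeumannEntropy ρ = ∑ i, Real.negMulLog (p i) := by
    rw [vonNeumannEntropy, dif_pos h]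
    rw [← Finset.sum_neg_distrib]
    exact Finset.sum_congr rfl fun i _ => by rw [Real.negMulLog]; ring
  -- split off the max eigenvalue
  have hsplit : ∑ i, Real.negMulLog (p i)
      = Real.negMulLog μ + ∑ i ∈ Finset.univ.erase i0, Real.negMulLog (p i) := by
    rw [← Finset.add_sum_erase _ _ (Finset.mem_univ i0)]
  have hcard : ((Finset.univ.erase i0).card : ℝ) = (d:ℝ) - 1 := by
    rw [Finset.card_erase_of_mem (Finset.mem_univ i0)]
    simp only [Finset.card_univ, Fintype.card_fin]
    have : 1 ≤ d := by omega
    push_cast [Nat.cast_sub this]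
    ring
  have hsumerase : ∑ i ∈ Finset.univ.erase i0, p i = 1 - μ := by
    have := Finset.add_sum_erase Finset.univ p (Finset.mem_univ i0)
    rw [hsum] at this
    linarith [this]
  have hne : (Finset.univ.erase i0).Nonempty := by
    rw [← Finset.card_pos]
    have : ((Finset.univ.erase i0).card : ℝ) > 0 := by rw [hcard]; linarith
    exact_mod_cast this
  have hjensen : ∑ i ∈ Finset.univ.erase i0, Real.negMulLog (p i)
      ≤ ((d:ℝ) - 1) * Real.negMulLog ((1 - μ) / ((d:ℝ) - 1)) := by
    have := aux_jensen_negMulLog (Finset.univ.erase i0) hne p (fun i _ => hpnn i)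
    rwa [hcard, hsumerase] at this
  have h1μ : 0 ≤ 1 - μ := by linarith
  have hscale : ((d:ℝ) - 1) * Real.negMulLog ((1 - μ) / ((d:ℝ) - 1))
      = Real.negMulLog (1 - μ) + (1 - μ) * Real.log ((d:ℝ) - 1) :=
    aux_scale_negMulLog h1μ hd0
  -- the function g
  set g : ℝ → ℝ := fun t =>
    Real.negMulLog t + Real.negMulLog (1 - t) + (1 - t) * Real.log ((d:ℝ) - 1) with hgdef
  have hHg : vonNeumannEntropy ρ ≤ g μ := by
    rw [hent, hsplit, hgdef]
    simp only
    have := hjensen.trans_eq hscale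
    linarith
  have hmem : ((d:ℝ) - 1) + 1 = (d:ℝ) := by ring
  have hanti : AntitoneOn g (Set.Icc ((d:ℝ))⁻¹ 1) := by
    have := aux_g_antitone (c := (d:ℝ) - 1) hd1
    rwa [hmem] at this
  have hglam : g μ ≤ g lam := by
    apply hanti
    · exact ⟨hlam₁, hlam₂.le⟩
    · exact ⟨hμd, hμ1⟩
    · exact hlamμ
  have hgval : g lam = -lam * Real.log lam + (1 - lam) * Real.log (((d:ℝ) - 1) / (1 - lam)) := by
    rw [hgdef]
    simp only
    rw [Real.log_div hd0.ne' (by linarith : (1:ℝ) - lam ≠ 0), Real.negMulLog, Real.negMulLog]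
    ring
  calc vonNeumannEntropy ρ ≤ g μ := hHg
    _ ≤ g lam := hglam
    _ = _ := hgval
end
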